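/- Let a, n be positive integers, let M be a 2^n × 2^n Hermitian complex matrix, let α > 0, and let U be a unitary matrix indexed by Fin 2^a × Fin 2^n that is an exact α-block encoding of M, i.e. U((0,s₁),(0,s₂)) = M_{s₁s₂}/α for all s₁,s₂ ∈ Fin 2^n. Then there exists a unitary matrix U′ indexed by Fin 2^a × Fin 2 × Fin 2^n such that for all c₁,c₂ ∈ Fin 2 and s₁,s₂ ∈ Fin 2^n: U′((0,c₁,s₁),(0,c₂,s₂)) equals δ_{s₁s₂} if c₁ = c₂ = 0, equals M_{s₁s₂}/α if c₁ = c₂ = 1, and equals 0 if c₁ ≠ c₂. In other words, U′ is an exact 1-block encoding of the controlled matrix c-(M/α) = |0⟩⟨0| ⊗ I_{2^n} + |1⟩⟨1| ⊗ (M/α). -/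
import Mathlib

open Matrix

lemma blockDiagonal_mem_unitary {m o R : Type*} [Fintype m] [DecidableEq m]
    [Fintype o] [DecidableEq o] [CommRing R] [StarRing R]
    (M : o → Matrix m m R) (h : ∀ i, M i ∈ Matrix.unitaryGroup m R) :
    Matrix.blockDiagonal M ∈ Matrix.unitaryGroup (m × o) R := by
  rw [Matrix.mem_unitaryGroup_iff]
  have : star (Matrix.blockDiagonal M) = Matrix.blockDiagonal (fun i => star (M i)) := by
    simp [Matrix.star_eq_conjTranspose, Matrix.blockDiagonal_conjTranspose]
  rw [this, ← Matrix.blockDiagonal_mul]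
  have h2 : (fun i => M i * star (M i)) = (1 : o → Matrix m m R) :=
    funext fun i => Matrix.mem_unitaryGroup_iff.mp (h i)
  rw [h2, Matrix.blockDiagonal_one]

lemma submatrix_equiv_mem_unitary {m p R : Type*} [Fintype m] [DecidableEq m]
    [Fintype p] [DecidableEq p] [CommRing R] [StarRing R]
    (A : Matrix m m R) (e : p ≃ m) (h : A ∈ Matrix.unitaryGroup m R) :
    A.submatrix e e ∈ Matrix.unitaryGroup p R := by
  rw [Matrix.mem_unitaryGroup_iff]
  have : star (A.submatrix e e) = (star A).submatrix e e := by
    simp [Matrix.star_eq_conjTranspose, Matrix.conjTranspose_submatrix]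
  rw [this, Matrix.submatrix_mul_equiv, Matrix.mem_unitaryGroup_iff.mp h,
    Matrix.submatrix_one_equiv]

/-- Given an exact `α`-block encoding `U` (on `a` ancilla qubits and `n` system qubits)
of a Hermitian matrix `M`, there exists a unitary `U′` on one extra (control) qubit that
is an exact `1`-block encoding of the controlled matrix
`c-(M/α) = |0⟩⟨0| ⊗ I + |1⟩⟨1| ⊗ (M/α)`. -/
theorem controlled_block_encoding (a n : ℕ) (ha : 0 < a) (hn : 0 < n)
    (M : Matrix (Fin (2 ^ n)) (Fin (2 ^ n)) ℂ) (hM : M.IsHermitian)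
    (α : ℝ) (hα : 0 < α)
    (U : Matrix (Fin (2 ^ a) × Fin (2 ^ n)) (Fin (2 ^ a) × Fin (2 ^ n)) ℂ)
    (hU : U ∈ Matrix.unitaryGroup (Fin (2 ^ a) × Fin (2 ^ n)) ℂ)
    (hUM : ∀ s₁ s₂ : Fin (2 ^ n), U (0, s₁) (0, s₂) = M s₁ s₂ / (α : ℂ)) :
    ∃ U' : Matrix (Fin (2 ^ a) × Fin 2 × Fin (2 ^ n))
        (Fin (2 ^ a) × Fin 2 × Fin (2 ^ n)) ℂ,
      U' ∈ Matrix.unitaryGroup (Fin (2 ^ a) × Fin 2 × Fin (2 ^ n)) ℂ ∧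
      (∀ s₁ s₂ : Fin (2 ^ n), U' (0, 0, s₁) (0, 0, s₂) = if s₁ = s₂ then 1 else 0) ∧
      (∀ s₁ s₂ : Fin (2 ^ n), U' (0, 1, s₁) (0, 1, s₂) = M s₁ s₂ / (α : ℂ)) ∧
      (∀ (c₁ c₂ : Fin 2) (s₁ s₂ : Fin (2 ^ n)), c₁ ≠ c₂ →
        U' (0, c₁, s₁) (0, c₂, s₂) = 0) := by
  classical
  set V : Fin 2 → Matrix (Fin (2 ^ a) × Fin (2 ^ n)) (Fin (2 ^ a) × Fin (2 ^ n)) ℂ :=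
    fun c => if c = 0 then 1 else U with hV
  have hVu : ∀ c, V c ∈ Matrix.unitaryGroup (Fin (2 ^ a) × Fin (2 ^ n)) ℂ := by
    intro c
    by_cases h : c = 0
    · simpa [hV, h] using one_mem (Matrix.unitaryGroup (Fin (2 ^ a) × Fin (2 ^ n)) ℂ)
    · simpa [hV, h] using hU
  let e : (Fin (2 ^ a) × Fin 2 × Fin (2 ^ n)) ≃ ((Fin (2 ^ a) × Fin (2 ^ n)) × Fin 2) :=
    { toFun := fun x => ((x.1, x.2.2), x.2.1)
      invFun := fun x => (x.1.1, x.2, x.1.2)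
      left_inv := fun x => rfl
      right_inv := fun x => rfl }
  refine ⟨(Matrix.blockDiagonal V).submatrix e e,
    submatrix_equiv_mem_unitary _ e (blockDiagonal_mem_unitary V hVu), ?_, ?_, ?_⟩
  · intro s₁ s₂
    simp [e, Matrix.blockDiagonal_apply, hV, Matrix.one_apply, Prod.ext_iff]
  · intro s₁ s₂
    simp [e, Matrix.blockDiagonal_apply, hV, hUM]
  · intro c₁ c₂ s₁ s₂ hc
    simp [e, Matrix.blockDiagonal_apply, hc]
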